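/- (Exact Top-k result.) Assume the SpaceSaving guarantees with table size K on a stream of length N with sorted frequency function f. Let k < K ≤ n and suppose c_K < f(k) − f(k+1). Then the k table positions with the largest counters hold exactly the k most frequent elements: {σ(1), σ(2), …, σ(k)} = {1, 2, …, k}. -/

import Mathlib

/-- exact Top-k: under the SpaceSaving guarantees with table size
`K`, if `k < K ≤ n` and `c K < f k - f (k+1)`, then the `k` table positions
with largest counters hold exactly the `k` most frequent elements:
`{σ 1, …, σ k} = {1, …, k}`. -/
theorem stmt4
    (n K N : ℕ) (f c σ : ℕ → ℕ)
    (hfmono : ∀ i ∈ Finset.Icc 1 n, ∀ j ∈ Finset.Icc 1 n, i ≤ j → f j ≤ f i)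
    (hfsum : ∑ i ∈ Finset.Icc 1 n, f i = N)
    (hcmono : ∀ i ∈ Finset.Icc 1 K, ∀ j ∈ Finset.Icc 1 K, i ≤ j → c j ≤ c i)
    (hcsum : ∑ j ∈ Finset.Icc 1 K, c j = N)
    (hσmem : ∀ j ∈ Finset.Icc 1 K, σ j ∈ Finset.Icc 1 n)
    (hσinj : ∀ j ∈ Finset.Icc 1 K, ∀ j' ∈ Finset.Icc 1 K, σ j = σ j' → j = j')
    (hlow : ∀ j ∈ Finset.Icc 1 K, c j ≤ f (σ j) + c K)
    (hup : ∀ j ∈ Finset.Icc 1 K, f (σ j) ≤ c j)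
    (hout : ∀ i ∈ Finset.Icc 1 n, (∀ j ∈ Finset.Icc 1 K, σ j ≠ i) → f i ≤ c K)
    (k : ℕ) (hk1 : 1 ≤ k) (hkK : k < K) (hKn : K ≤ n)
    (hgap : (c K : ℝ) < (f k : ℝ) - (f (k + 1) : ℝ)) :
    Finset.image σ (Finset.Icc 1 k) = Finset.Icc 1 k := by
  have hgapN : f (k + 1) + c K < f k := by
    have h1 : (f (k + 1) : ℝ) + (c K : ℝ) < (f k : ℝ) := by linarith
    exact_mod_cast h1
  set A := (Finset.Icc 1 K).filter (fun j => σ j ∈ Finset.Icc 1 k) with hA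
  have himg : Finset.image σ A = Finset.Icc 1 k := by
    apply Finset.Subset.antisymm
    · intro i hi
      simp only [Finset.mem_image] at hi
      obtain ⟨j, hj, rfl⟩ := hi
      exact (Finset.mem_filter.mp hj).2
    · intro i hi
      have hi' := Finset.mem_Icc.mp hi
      have hiK : i ∈ Finset.Icc 1 n :=
        Finset.mem_Icc.mpr ⟨hi'.1, le_trans hi'.2 (le_trans hkK.le hKn)⟩
      have hfk : c K < f i := by
        have hkn : k ∈ Finset.Icc 1 n := Finset.mem_Icc.mpr ⟨hk1, le_trans hkK.le hKn⟩
        have := hfmono i hiK k hkn hi'.2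
        omega
      by_contra hcon
      have hne : ∀ j ∈ Finset.Icc 1 K, σ j ≠ i := by
        intro j hj hji
        exact hcon (Finset.mem_image.mpr ⟨j, Finset.mem_filter.mpr ⟨hj, by rw [hji]; exact hi⟩, hji⟩)
      have := hout i hiK hne
      omega
  have hinjA : Set.InjOn σ A := fun a ha b hb hab =>
    hσinj a (Finset.mem_filter.mp ha).1 b (Finset.mem_filter.mp hb).1 hab
  have hcard : A.card = k := by
    have := Finset.card_image_of_injOn hinjA
    rw [himg] at this
    simp [Nat.card_Icc] at this
    omega
  have hsub : Finset.Icc 1 k ⊆ A := by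
    intro j hj
    by_contra hjA
    have hj' := Finset.mem_Icc.mp hj
    have hjK : j ∈ Finset.Icc 1 K := Finset.mem_Icc.mpr ⟨hj'.1, by omega⟩
    have hlt : ∀ a ∈ A, a < j := by
      intro a ha
      have haK := (Finset.mem_filter.mp ha).1
      have haσ := Finset.mem_Icc.mp (Finset.mem_filter.mp ha).2
      have h1 : f k ≤ c a := by
        have hkn : k ∈ Finset.Icc 1 n := Finset.mem_Icc.mpr ⟨hk1, le_trans hkK.le hKn⟩
        have h2 := hup a haK
        have := hfmono (σ a) (hσmem a haK) k hkn haσ.2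
        omega
      have h2 : c j < f k := by
        have hσjn := hσmem j hjK
        have hσjk : ¬ σ j ∈ Finset.Icc 1 k := fun h =>
          hjA (Finset.mem_filter.mpr ⟨hjK, h⟩)
        have hσj := Finset.mem_Icc.mp hσjn
        have hge : k + 1 ≤ σ j := by
          simp only [Finset.mem_Icc] at hσjk; omega
        have hk1n : k + 1 ∈ Finset.Icc 1 n := Finset.mem_Icc.mpr ⟨by omega, by omega⟩
        have := hfmono (k + 1) hk1n (σ j) hσjn hge
        have := hlow j hjK
        omega
      by_contra hle
      push_neg at hle
      have := hcmono j hjK a haK hle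
      omega
    have hsubI : A ⊆ Finset.Icc 1 (j - 1) := by
      intro a ha
      have h1 := hlt a ha
      have h2 := (Finset.mem_Icc.mp (Finset.mem_filter.mp ha).1).1
      exact Finset.mem_Icc.mpr ⟨h2, by omega⟩
    have := Finset.card_le_card hsubI
    rw [hcard] at this
    simp [Nat.card_Icc] at this
    omega
  have hAeq : A = Finset.Icc 1 k := by
    apply (Finset.eq_of_subset_of_card_le hsub ?_).symm
    rw [hcard]; simp [Nat.card_Icc]
  rw [← hAeq, himg]; exact hAeq.symm
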